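/- arXiv:0707.2985 — 2 statements merged into one kernel-verified Lean document; each statement's English description precedes it below -/
import Mathlib

section
/- Let 0 ≠ η ∈ c₀* and suppose r(η_a) = η_{a²}/η_a is equivalent to a monotone sequence (there is a nondecreasing positive sequence φ and β > 0 with φ_n ≤ r(η_a)_n ≤ β·φ_n for all n). Then there exist constants K, M > 0 such that for every m ≥ M there exists n > m with (η_{a²})_n ≤ K·(m/n)·log(n/m)·(η_a)_m. -/
open Finset Filter Real

/-- First-order arithmetic mean: (ξ_a)_n = (1/n) ∑_{j=1}^n ξ_j. -/
noncomputable def am (ξ : ℕ → ℝ) (n : ℕ) : ℝ := (∑ j ∈ Finset.Icc 1 n, ξ j) / n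

/-- Second-order arithmetic mean. -/
noncomputable def am2 (ξ : ℕ → ℝ) : ℕ → ℝ := am (am ξ)

/-- Harmonic numbers H_n = ∑_{j=1}^n 1/j. -/
noncomputable def harm (n : ℕ) : ℝ := ∑ j ∈ Finset.Icc 1 n, (1 : ℝ) / j

lemma am_eq (ξ : ℕ → ℝ) (n : ℕ) : am ξ n = (∑ j ∈ Finset.Ioc 0 n, ξ j) / n := by
  rw [am, show Finset.Icc 1 n = Finset.Ioc 0 n from Finset.Icc_add_one_left_eq_Ioc 0 n]

lemma harm_eq (n : ℕ) : harm n = ∑ j ∈ Finset.Ioc 0 n, (1:ℝ) / j := by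
  rw [harm, show Finset.Icc 1 n = Finset.Ioc 0 n from Finset.Icc_add_one_left_eq_Ioc 0 n]

lemma harm_succ (n : ℕ) : harm (n + 1) = harm n + 1 / ((n : ℝ) + 1) := by
  rw [harm, harm, Finset.sum_Icc_succ_top (Nat.succ_le_succ (Nat.zero_le n))]
  push_cast; ring

lemma harm_sub (m n : ℕ) (h : m ≤ n) :
    harm n - harm m = ∑ j ∈ Finset.Ioc m n, (1:ℝ) / j := by
  have := Finset.sum_Ioc_consecutive (fun j : ℕ => (1:ℝ) / j) (Nat.zero_le m) h
  rw [harm_eq, harm_eq]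
  linarith [this]

lemma harm_tendsto : Tendsto harm atTop atTop := by
  have h : harm = fun n => ∑ i ∈ Finset.range n, (1:ℝ) / ((i : ℝ) + 1) := by
    funext n
    induction n with
    | zero => simp [harm]
    | succ k ih => rw [harm_succ, Finset.sum_range_succ, ih]
  rw [h]
  exact Real.tendsto_sum_range_one_div_nat_succ_atTop

lemma harm_le_log (m : ℕ) (hm : 1 ≤ m) :
    ∀ n, m ≤ n → harm n - harm m ≤ Real.log n - Real.log m := by
  intro n hn
  induction n, hn using Nat.le_induction with
  | base => simp
  | succ k hk ih =>
    have hk1 : (1:ℝ) ≤ (k:ℝ) := by exact_mod_cast hm.trans hk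
    have hkpos : (0:ℝ) < k := by linarith
    have h1 : Real.log ((k:ℝ) / ((k:ℝ)+1)) ≤ (k:ℝ)/((k:ℝ)+1) - 1 :=
      Real.log_le_sub_one_of_pos (by positivity)
    have h2 : Real.log ((k:ℝ) / ((k:ℝ)+1)) = Real.log k - Real.log ((k:ℝ)+1) :=
      Real.log_div (ne_of_gt hkpos) (by positivity)
    have h3 : (k:ℝ)/((k:ℝ)+1) - 1 = -(1/((k:ℝ)+1)) := by field_simp; ring
    have h4 : 1/((k:ℝ)+1) ≤ Real.log ((k:ℝ)+1) - Real.log k := by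
      rw [h2, h3] at h1; linarith
    rw [harm_succ]
    push_cast
    linarith

lemma am_pos (ξ : ℕ → ℝ) (h : ∀ i, 1 ≤ i → 0 < ξ i) {k : ℕ} (hk : 1 ≤ k) :
    0 < am ξ k := by
  rw [am]
  apply div_pos
  · exact Finset.sum_pos (fun i hi => h i (Finset.mem_Icc.mp hi).1)
      ⟨1, Finset.mem_Icc.mpr ⟨le_refl 1, hk⟩⟩
  · exact_mod_cast Nat.pos_of_ne_zero (by omega)

lemma phi_mono (φ : ℕ → ℝ) (h : ∀ n, 1 ≤ n → φ n ≤ φ (n+1)) :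
    ∀ a b, 1 ≤ a → a ≤ b → φ a ≤ φ b := by
  intro a b ha hab
  induction b, hab using Nat.le_induction with
  | base => exact le_rfl
  | succ k hk ih => exact ih.trans (h k (ha.trans hk))

set_option maxHeartbeats 1000000 in
theorem stmt_17 (η φ : ℕ → ℝ)
    (hmono : ∀ n : ℕ, 1 ≤ n → η (n + 1) ≤ η n)
    (hpos : ∀ n : ℕ, 1 ≤ n → 0 < η n)
    (hlim : Tendsto η atTop (nhds 0))
    (hφmono : ∀ n : ℕ, 1 ≤ n → φ n ≤ φ (n + 1))
    (hφpos : ∀ n : ℕ, 1 ≤ n → 0 < φ n)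
    (β : ℝ) (hβ : 0 < β)
    (hequiv : ∀ n : ℕ, 1 ≤ n → φ n ≤ am2 η n / am η n ∧ am2 η n / am η n ≤ β * φ n) :
    ∃ (K : ℝ) (M : ℕ), 0 < K ∧ 0 < M ∧ ∀ m : ℕ, M ≤ m →
      ∃ n : ℕ, m < n ∧
        am2 η n ≤ K * ((m : ℝ) / n) * Real.log ((n : ℝ) / m) * am η m := by
  classical
  have hφ1 : 0 < φ 1 := hφpos 1 le_rfl
  obtain ⟨M, hM⟩ := exists_nat_gt (4 / φ 1)
  have hM0 : 0 < M := by
    by_contra h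
    push_neg at h
    interval_cases M
    · simp at hM
      have : 0 < 4 / φ 1 := by positivity
      linarith
  have hMφ : 1 / (M:ℝ) ≤ φ 1 / 4 := by
    rw [div_le_div_iff₀ (by exact_mod_cast hM0) (by norm_num)]
    have := (div_lt_iff₀ hφ1).mp hM
    nlinarith
  refine ⟨2 * (4 * β + 1), M, by positivity, hM0, ?_⟩
  intro m hm
  have hm1 : 1 ≤ m := hM0.trans_le hm
  have hm0 : (0:ℝ) < m := by exact_mod_cast hm1
  have hφm : 0 < φ m := hφpos m hm1
  have hφ1m : φ 1 ≤ φ m := phi_mono φ hφmono 1 m le_rfl hm1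
  have h1m : 1 / (m:ℝ) ≤ φ m / 4 := by
    have : 1 / (m:ℝ) ≤ 1 / (M:ℝ) :=
      one_div_le_one_div_of_le (by exact_mod_cast hM0) (by exact_mod_cast hm)
    linarith
  set c : ℝ := φ m / 4 with hc
  clear_value c
  have hc0 : 0 < c := by rw [hc]; positivity
  -- choose minimal n with m < n and harm m + c ≤ harm n
  have hex : ∃ n : ℕ, m < n ∧ harm m + c ≤ harm n := by
    have h1 := harm_tendsto.eventually_ge_atTop (harm m + c)
    obtain ⟨n, hn1, hn2⟩ := (h1.and (eventually_gt_atTop m)).exists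
    exact ⟨n, hn2, hn1⟩
  obtain ⟨n, ⟨hmn, hhn⟩, hmin⟩ :
      ∃ n, (m < n ∧ harm m + c ≤ harm n) ∧ ∀ k < n, ¬(m < k ∧ harm m + c ≤ harm k) :=
    ⟨Nat.find hex, Nat.find_spec hex, fun k hk => Nat.find_min hex hk⟩
  refine ⟨n, hmn, ?_⟩
  have hn1 : 1 ≤ n := hm1.trans hmn.le
  have hn0 : (0:ℝ) < n := by exact_mod_cast hn1
  set D : ℝ := harm n - harm m with hD
  clear_value D
  have hDc : c ≤ D := by simp only [hD]; linarith
  have hD0 : 0 < D := hc0.trans_le hDc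
  -- minimality gives D ≤ φ m / 2
  have hD2 : D ≤ φ m / 2 := by
    obtain ⟨p, rfl⟩ : ∃ p, n = p + 1 := ⟨n - 1, by omega⟩
    have hminp := hmin p (by omega)
    have hp : harm p < harm m + c := by
      by_cases hmp : m < p
      · by_contra h
        push_neg at h
        exact hminp ⟨hmp, h⟩
      · push_neg at hmp
        have : p = m := by omega
        subst this
        linarith
    have hs := harm_succ p
    have h1n : 1 / ((p:ℝ) + 1) ≤ φ m / 4 := by
      have hmp1 : (m:ℝ) ≤ (p:ℝ) + 1 := by exact_mod_cast hmn.le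
      have : 1 / ((p:ℝ) + 1) ≤ 1 / (m:ℝ) :=
        one_div_le_one_div_of_le hm0 hmp1
      linarith
    simp only [hD]
    push_cast at hs ⊢
    linarith
  -- basic positivity
  have hηpos : ∀ i, 1 ≤ i → 0 < η i := hpos
  have hAm : 0 < am η m := am_pos η hηpos hm1
  have hAn : 0 < am η n := am_pos η hηpos hn1
  have hApos : ∀ i, 1 ≤ i → 0 < am η i := fun i hi => am_pos η hηpos hi
  have hA2m : 0 < am2 η m := am_pos (am η) hApos hm1
  have hA2n : 0 < am2 η n := am_pos (am η) hApos hn1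
  have hφn : 0 < φ n := hφpos n hn1
  -- sum identities
  have hSm : ∑ j ∈ Finset.Ioc 0 m, η j = (m:ℝ) * am η m := by
    rw [am_eq]; field_simp
  have hSAm : ∑ j ∈ Finset.Ioc 0 m, am η j = (m:ℝ) * am2 η m := by
    rw [am2, am_eq]; field_simp
  have hSAn : ∑ j ∈ Finset.Ioc 0 n, am η j = (n:ℝ) * am2 η n := by
    rw [am2, am_eq]; field_simp
  have hSηn : ∑ j ∈ Finset.Ioc 0 n, η j = (n:ℝ) * am η n := by
    rw [am_eq]; field_simp
  set S : ℝ := ∑ i ∈ Finset.Ioc m n, η i with hS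
  clear_value S
  have hsplitη : (n:ℝ) * am η n = (m:ℝ) * am η m + S := by
    rw [← hSηn, ← hSm, hS, Finset.sum_Ioc_consecutive _ (Nat.zero_le m) hmn.le]
  have hS0 : 0 ≤ S := by
    rw [hS]
    exact Finset.sum_nonneg fun i hi =>
      (hpos i (by have := (Finset.mem_Ioc.mp hi).1; omega)).le
  have hS_le : S ≤ (n:ℝ) * am η n := by nlinarith
  -- harmonic sum over Ioc m n
  have hDsum : ∑ j ∈ Finset.Ioc m n, (1:ℝ) / j = D := by
    rw [hD]; exact (harm_sub m n hmn.le).symm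
  -- pointwise bound for j in Ioc m n
  have hj : ∀ j ∈ Finset.Ioc m n, am η j ≤ ((m:ℝ) * am η m + S) * (1 / (j:ℝ)) := by
    intro j hjmem
    obtain ⟨hmj, hjn⟩ := Finset.mem_Ioc.mp hjmem
    have hj0 : (0:ℝ) < j := by exact_mod_cast (by omega : 0 < j)
    have hval : am η j = ((m:ℝ) * am η m + ∑ i ∈ Finset.Ioc m j, η i) / j := by
      rw [am_eq, ← Finset.sum_Ioc_consecutive _ (Nat.zero_le m) hmj.le, hSm]
    have htail : ∑ i ∈ Finset.Ioc m j, η i ≤ S := by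
      rw [hS]
      apply Finset.sum_le_sum_of_subset_of_nonneg (Finset.Ioc_subset_Ioc_right hjn)
      intro i hi _
      exact (hpos i (by have := (Finset.mem_Ioc.mp hi).1; omega)).le
    rw [hval, mul_one_div]
    gcongr
  -- sum the pointwise bound
  have hsum : ∑ j ∈ Finset.Ioc m n, am η j ≤ ((m:ℝ) * am η m + S) * D := by
    calc ∑ j ∈ Finset.Ioc m n, am η j
        ≤ ∑ j ∈ Finset.Ioc m n, ((m:ℝ) * am η m + S) * (1 / (j:ℝ)) :=
          Finset.sum_le_sum hj
      _ = ((m:ℝ) * am η m + S) * ∑ j ∈ Finset.Ioc m n, (1:ℝ) / j := by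
          rw [Finset.mul_sum]
      _ = ((m:ℝ) * am η m + S) * D := by rw [hDsum]
  have hkey : (n:ℝ) * am2 η n ≤ (m:ℝ) * am2 η m + (m:ℝ) * am η m * D + S * D := by
    have hsplitA : (n:ℝ) * am2 η n = (m:ℝ) * am2 η m + ∑ j ∈ Finset.Ioc m n, am η j := by
      rw [← hSAn, ← hSAm, Finset.sum_Ioc_consecutive _ (Nat.zero_le m) hmn.le]
    nlinarith [hsum]
  -- absorb S * D
  have hAn2 : φ n * am η n ≤ am2 η n := by
    have h := (hequiv n hn1).1
    exact (le_div_iff₀ hAn).mp h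
  have hDφn : D ≤ φ n / 2 := by
    have : φ m ≤ φ n := phi_mono φ hφmono m n hm1 hmn.le
    linarith
  have hE4 : S * D ≤ (n:ℝ) * am2 η n / 2 := by
    calc S * D ≤ ((n:ℝ) * am η n) * D := mul_le_mul_of_nonneg_right hS_le hD0.le
      _ ≤ ((n:ℝ) * am η n) * (φ n / 2) := by
          apply mul_le_mul_of_nonneg_left hDφn
          positivity
      _ = ((n:ℝ) / 2) * (φ n * am η n) := by ring
      _ ≤ ((n:ℝ) / 2) * am2 η n := by
          apply mul_le_mul_of_nonneg_left hAn2
          positivity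
      _ = (n:ℝ) * am2 η n / 2 := by ring
  -- bound am2 η m
  have hA2mb : am2 η m ≤ β * φ m * am η m := by
    have h := (hequiv m hm1).2
    exact (div_le_iff₀ hAm).mp h
  have hφmD : φ m ≤ 4 * D := by linarith [hDc, hc.le, hc.ge]
  have hE2 : (m:ℝ) * am2 η m ≤ 4 * β * ((m:ℝ) * am η m * D) := by
    have h1 : (m:ℝ) * am2 η m ≤ (m:ℝ) * (β * φ m * am η m) :=
      mul_le_mul_of_nonneg_left hA2mb hm0.le
    have h2 : β * φ m * am η m ≤ β * (4 * D) * am η m := by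
      apply mul_le_mul_of_nonneg_right _ hAm.le
      exact mul_le_mul_of_nonneg_left hφmD hβ.le
    nlinarith
  -- combine
  have hfinal : (n:ℝ) * am2 η n ≤ 2 * (4 * β + 1) * ((m:ℝ) * am η m * D) := by
    linarith
  have hgoal1 : am2 η n ≤ 2 * (4 * β + 1) * ((m:ℝ) / n) * D * am η m := by
    rw [show 2 * (4 * β + 1) * ((m:ℝ) / n) * D * am η m
        = (2 * (4 * β + 1) * ((m:ℝ) * am η m * D)) / n by field_simp]
    rw [le_div_iff₀ hn0]
    nlinarith [hfinal]
  -- D ≤ log (n/m)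
  have hDlog : D ≤ Real.log ((n:ℝ) / m) := by
    have h := harm_le_log m hm1 n hmn.le
    rw [Real.log_div (ne_of_gt hn0) (ne_of_gt hm0)]
    simp only [hD]
    linarith
  calc am2 η n ≤ 2 * (4 * β + 1) * ((m:ℝ) / n) * D * am η m := hgoal1
    _ = (2 * (4 * β + 1) * ((m:ℝ) / n) * am η m) * D := by ring
    _ ≤ (2 * (4 * β + 1) * ((m:ℝ) / n) * am η m) * Real.log ((n:ℝ) / m) := by
        apply mul_le_mul_of_nonneg_left hDlog
        positivity
    _ = 2 * (4 * β + 1) * ((m:ℝ) / n) * Real.log ((n:ℝ) / m) * am η m := by ring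
end

section
/- Let η, ξ ∈ c₀* with positive terms, and suppose there exist α, β > 0 with α·log n ≤ (η_{a²})_n/(η_a)_n ≤ β·log n for all n ≥ 2. If (η_{a²})_n ≤ (ξ_{a²})_n for all n, then there exists K > 0 with (η_a)_n ≤ K·(ξ_a)_n for all n, i.e., η_a = O(ξ_a). -/
open Finset Filter Real

lemma am_pos_s19 (ξ : ℕ → ℝ) (hpos : ∀ n : ℕ, 1 ≤ n → 0 < ξ n) (n : ℕ) (hn : 1 ≤ n) :
    0 < am ξ n := by
  apply div_pos
  · apply Finset.sum_pos
    · intro i hi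
      exact hpos i (Finset.mem_Icc.mp hi).1
    · exact ⟨1, Finset.mem_Icc.mpr ⟨le_refl 1, hn⟩⟩
  · exact_mod_cast Nat.pos_of_ne_zero (by omega)

lemma harm_eq_s19 (n : ℕ) : harm n = (harmonic n : ℝ) := by
  rw [harm, harmonic_eq_sum_Icc]
  push_cast
  simp [one_div]

lemma am2_le_harm_mul (ξ : ℕ → ℝ) (hpos : ∀ n : ℕ, 1 ≤ n → 0 < ξ n) (n : ℕ) (hn : 1 ≤ n) :
    am2 ξ n ≤ harm n * am ξ n := by
  have hnpos : (0:ℝ) < n := by exact_mod_cast Nat.pos_of_ne_zero (by omega)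
  have key : ∑ k ∈ Finset.Icc 1 n, am ξ k ≤ harm n * ∑ j ∈ Finset.Icc 1 n, ξ j := by
    rw [harm, Finset.sum_mul]
    apply Finset.sum_le_sum
    intro k hk
    obtain ⟨hk1, hkn⟩ := Finset.mem_Icc.mp hk
    have hkpos : (0:ℝ) < k := by exact_mod_cast Nat.pos_of_ne_zero (by omega)
    rw [am, one_div, inv_mul_eq_div]
    apply div_le_div_of_nonneg_right ?_ hkpos.le
    exact Finset.sum_le_sum_of_subset_of_nonneg (Finset.Icc_subset_Icc_right hkn)
      (fun i hi _ => le_of_lt (hpos i (Finset.mem_Icc.mp hi).1))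
  rw [am2, am, am]
  rw [div_le_iff₀ hnpos] at *
  calc (∑ k ∈ Finset.Icc 1 n, am ξ k) ≤ harm n * ∑ j ∈ Finset.Icc 1 n, ξ j := key
    _ = harm n * ((∑ j ∈ Finset.Icc 1 n, ξ j) / n) * n := by
        field_simp
  
theorem stmt_19 (η ξ : ℕ → ℝ)
    (hηmono : ∀ n : ℕ, 1 ≤ n → η (n + 1) ≤ η n)
    (hηpos : ∀ n : ℕ, 1 ≤ n → 0 < η n)
    (hηlim : Tendsto η atTop (nhds 0))
    (hξmono : ∀ n : ℕ, 1 ≤ n → ξ (n + 1) ≤ ξ n)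
    (hξpos : ∀ n : ℕ, 1 ≤ n → 0 < ξ n)
    (hξlim : Tendsto ξ atTop (nhds 0))
    (α β : ℝ) (hα : 0 < α) (hβ : 0 < β)
    (hlog : ∀ n : ℕ, 2 ≤ n →
      α * Real.log n ≤ am2 η n / am η n ∧ am2 η n / am η n ≤ β * Real.log n)
    (hle : ∀ n : ℕ, 1 ≤ n → am2 η n ≤ am2 ξ n) :
    ∃ K : ℝ, 0 < K ∧ ∀ n : ℕ, 1 ≤ n → am η n ≤ K * am ξ n := by
  have hlog2 : (0:ℝ) < Real.log 2 := Real.log_pos (by norm_num)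
  set K₁ : ℝ := (1 + 1 / Real.log 2) / α with hK₁
  have hK₁pos : 0 < K₁ := by positivity
  have hξ1 := am_pos_s19 ξ hξpos 1 le_rfl
  have hη1 := am_pos_s19 η hηpos 1 le_rfl
  set K : ℝ := max K₁ (am η 1 / am ξ 1) with hK
  refine ⟨K, lt_of_lt_of_le hK₁pos (le_max_left _ _), ?_⟩
  intro n hn
  rcases eq_or_lt_of_le hn with h1 | h2
  · -- n = 1
    rw [← h1]
    have : am η 1 = (am η 1 / am ξ 1) * am ξ 1 := by field_simp
    rw [this]
    exact mul_le_mul_of_nonneg_right (le_max_right _ _) (le_of_lt hξ1)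
  · -- n ≥ 2
    have hn2 : 2 ≤ n := h2
    have hηn := am_pos_s19 η hηpos n hn
    have hξn := am_pos_s19 ξ hξpos n hn
    have hlogn : Real.log 2 ≤ Real.log n := by
      apply Real.log_le_log (by norm_num)
      exact_mod_cast hn2
    have hlognpos : 0 < Real.log n := lt_of_lt_of_le hlog2 hlogn
    have h1 : α * Real.log n * am η n ≤ am2 η n := by
      have := (hlog n hn2).1
      rw [le_div_iff₀ hηn] at this
      exact this
    have h2' : am2 ξ n ≤ (1 + Real.log n) * am ξ n := by
      calc am2 ξ n ≤ harm n * am ξ n := am2_le_harm_mul ξ hξpos n hn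
        _ ≤ (1 + Real.log n) * am ξ n := by
            apply mul_le_mul_of_nonneg_right _ (le_of_lt hξn)
            rw [harm_eq_s19]
            exact harmonic_le_one_add_log n
    have chain : α * Real.log n * am η n ≤ (1 + Real.log n) * am ξ n :=
      le_trans h1 (le_trans (hle n hn) h2')
    have hfinal : am η n ≤ ((1 + Real.log n) / (α * Real.log n)) * am ξ n := by
      rw [div_mul_eq_mul_div, le_div_iff₀ (by positivity)]
      linarith [chain]
    refine le_trans hfinal ?_
    apply mul_le_mul_of_nonneg_right _ (le_of_lt hξn)
    refine le_trans ?_ (le_max_left K₁ _)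
    rw [hK₁, div_le_div_iff₀ (by positivity) hα]
    have hd : 1 ≤ Real.log n / Real.log 2 := (one_le_div hlog2).mpr hlogn
    have e : (1:ℝ) ≤ 1 / Real.log 2 * Real.log n := by
      rw [one_div, inv_mul_eq_div]; exact hd
    nlinarith [mul_le_mul_of_nonneg_left e hα.le, hlognpos.le]
end
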